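/- Let r ≥ 1, let δ be an integer, and set ρ̂ = (−δ/2, −δ/2 − 1, …, −δ/2 − (r−1)) ∈ ℚ^r. Let λ and μ be partitions with at most r parts such that μ ⊊ λ and μ + ρ̂ = w(λ + ρ̂) for some even signed permutation w. Then there exist indices 1 ≤ i < j ≤ r such that (λ+ρ̂)_i + (λ+ρ̂)_j > 0 and the vector ν = s_{ε_i+ε_j}(λ+ρ̂) has pairwise distinct entries, all strictly greater than −δ/2 − r. -/

import Mathlib

/-- `y` is obtained from `x ∈ ℚ^r` by an even signed permutation (an element of
the Weyl group `W(D_r)`: a signed permutation with `∏ i, ε i = 1`). -/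
def IsEvenSignedPermOfQ {r : ℕ} (x y : Fin r → ℚ) : Prop :=
  ∃ (σ : Equiv.Perm (Fin r)) (ε : Fin r → ℚ),
    (∀ i, ε i = 1 ∨ ε i = -1) ∧ (∏ i, ε i) = 1 ∧ ∀ i, y i = ε i * x (σ i)

/-- Builder for the final two conclusions:  given a pair `i < j` with the
appropriate separation properties, the reflected vector is injective and
bounded below. -/
lemma nu_props {r : ℕ} (x : Fin r → ℚ) (L : ℚ)
    (hinj : Function.Injective x)
    (i j : Fin r) (hij : i ≠ j)
    (hi2 : ∀ k, k ≠ i → k ≠ j → x k ≠ -x i)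
    (hj2 : ∀ k, k ≠ i → k ≠ j → x k ≠ -x j)
    (hlb : ∀ k, L < x k) (hbi : x i < -L) (hbj : x j < -L) :
    Function.Injective (fun k : Fin r =>
      if k = i then -(x j) else if k = j then -(x i) else x k) ∧
    ∀ k : Fin r, L <
      (if k = i then -(x j) else if k = j then -(x i) else x k) := by
  constructor
  · intro a b hab
    simp only at hab
    split_ifs at hab with h1 h2 h3 h4 h5 h6 h7 h8
    all_goals try subst_vars
    all_goals try rfl
    all_goals first
      | exact hinj hab
      | exact (hinj (neg_injective hab)).symm
      | exact hinj (neg_injective hab)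
      | exact absurd hab.symm (hj2 _ ‹_› ‹_›)
      | exact absurd hab.symm (hi2 _ ‹_› ‹_›)
      | exact absurd hab (hj2 _ ‹_› ‹_›)
      | exact absurd hab (hi2 _ ‹_› ‹_›)
  · intro k
    split_ifs with h1 h2
    · linarith [hbj]
    · linarith [hbi]
    · exact hlb k

/-- The main combinatorial lemma. -/
lemma main_lemma {r : ℕ} (x y : Fin r → ℚ) (L : ℚ)
    (hxsa : StrictAnti x) (hyinj : Function.Injective y)
    (hylb : ∀ k, L < y k)
    (hzero : ∀ k, x k = 0 → 0 < -L)
    (hsum : ∑ k, y k < ∑ k, x k)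
    (σ : Equiv.Perm (Fin r)) (ε : Fin r → ℚ)
    (hε : ∀ i, ε i = 1 ∨ ε i = -1) (hprod : ∏ i, ε i = 1)
    (hyx : ∀ i, y i = ε i * x (σ i)) :
    ∃ i j : Fin r, i < j ∧ 0 < x i + x j ∧
      (∀ k, k ≠ i → k ≠ j → x k ≠ -x i) ∧
      (∀ k, k ≠ i → k ≠ j → x k ≠ -x j) ∧
      x i < -L ∧ x j < -L := by
  classical
  have hxinj : Function.Injective x := hxsa.injective
  set A : Finset ℚ := Finset.image x Finset.univ with hA
  set B : Finset ℚ := Finset.image y Finset.univ with hB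
  have hcardA : A.card = r := by
    rw [hA, Finset.card_image_of_injective _ hxinj, Finset.card_univ, Fintype.card_fin]
  have hcardB : B.card = r := by
    rw [hB, Finset.card_image_of_injective _ hyinj, Finset.card_univ, Fintype.card_fin]
  set η : Fin r → ℚ := fun m => ε (σ.symm m) with hηdef
  have hη1 : ∀ m, η m = 1 ∨ η m = -1 := fun m => hε _
  have hmemB : ∀ m, η m * x m ∈ B := by
    intro m
    have h1 : y (σ.symm m) = η m * x m := by
      rw [hyx (σ.symm m), Equiv.apply_symm_apply]
    rw [← h1]
    exact Finset.mem_image_of_mem y (Finset.mem_univ _)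
  have hBrep : ∀ b ∈ B, ∃ m, b = η m * x m := by
    intro b hb
    rw [hB] at hb
    obtain ⟨t, -, ht⟩ := Finset.mem_image.mp hb
    refine ⟨σ t, ?_⟩
    rw [← ht, hyx t, hηdef]
    simp
  set P : Finset (Fin r) := Finset.univ.filter (fun m => x m ∉ B) with hP
  have hPmem : ∀ m, m ∈ P ↔ x m ∉ B := by intro m; simp [hP]
  have hPneg : ∀ m ∈ P, η m = -1 ∧ x m ≠ 0 ∧ -x m ∈ B := by
    intro m hm
    have hxm : x m ∉ B := (hPmem m).mp hm
    rcases hη1 m with h | h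
    · exact absurd (by simpa [h] using hmemB m) hxm
    · have hneg : -x m ∈ B := by
        have := hmemB m
        rwa [h, neg_one_mul] at this
      refine ⟨h, ?_, hneg⟩
      intro h0
      rw [h0, neg_zero] at hneg
      rw [h0] at hxm
      exact hxm hneg
  have hAB : A \ B = P.image x := by
    ext a
    simp only [Finset.mem_sdiff, Finset.mem_image, hA, hP, Finset.mem_filter,
      Finset.mem_univ, true_and]
    constructor
    · rintro ⟨⟨m, rfl⟩, hnb⟩; exact ⟨m, hnb, rfl⟩
    · rintro ⟨m, hnb, rfl⟩; exact ⟨⟨m, rfl⟩, hnb⟩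
  have hBAsub : B \ A ⊆ P.image (fun m => -x m) := by
    intro b hb
    obtain ⟨hbB, hbA⟩ := Finset.mem_sdiff.mp hb
    obtain ⟨m, rfl⟩ := hBrep b hbB
    have hxmA : x m ∈ A := Finset.mem_image_of_mem x (Finset.mem_univ m)
    rcases hη1 m with h | h
    · rw [h, one_mul] at hbA; exact absurd hxmA hbA
    · rw [h, neg_one_mul] at hbA hbB ⊢
      have hmP : m ∈ P := by
        rw [hPmem]
        intro hxB
        obtain ⟨p, hp⟩ := hBrep _ hxB
        rcases hη1 p with h' | h'
        · rw [h', one_mul] at hp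
          have hpm : p = m := hxinj hp.symm
          rw [hpm, h] at h'
          norm_num at h'
        · rw [h', neg_one_mul] at hp
          have : x p = -x m := by linarith
          exact hbA (this ▸ Finset.mem_image_of_mem x (Finset.mem_univ p))
      exact Finset.mem_image_of_mem _ hmP
  have hnegxinj : Function.Injective (fun m : Fin r => -x m) :=
    fun a b hab => hxinj (neg_injective hab)
  have hcardsd : (B \ A).card = P.card := by
    have h1 : (A \ B).card + (A ∩ B).card = A.card := Finset.card_sdiff_add_card_inter A B
    have h2 : (B \ A).card + (B ∩ A).card = B.card := Finset.card_sdiff_add_card_inter B A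
    have h3 : A ∩ B = B ∩ A := Finset.inter_comm A B
    have h4 : (A \ B).card = P.card := by
      rw [hAB, Finset.card_image_of_injective _ hxinj]
    rw [h3] at h1
    omega

  have hBA : B \ A = P.image (fun m => -x m) := by
    apply Finset.eq_of_subset_of_card_le hBAsub
    rw [Finset.card_image_of_injective _ hnegxinj, hcardsd]
  have hnotA : ∀ m ∈ P, -x m ∉ A := by
    intro m hm
    have h : -x m ∈ B \ A := by
      rw [hBA]; exact Finset.mem_image_of_mem _ hm
    exact (Finset.mem_sdiff.mp h).2
  have hbound : ∀ m ∈ P, x m < -L := by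
    intro m hm
    obtain ⟨-, -, hmB⟩ := hPneg m hm
    rw [hB] at hmB
    obtain ⟨t, -, ht⟩ := Finset.mem_image.mp hmB
    have := hylb t
    rw [ht] at this
    linarith
  -- sum identities
  have hsumA : ∑ a ∈ A, a = ∑ k, x k := by
    rw [hA]; exact Finset.sum_image (fun a _ b _ h => hxinj h)
  have hsumB : ∑ b ∈ B, b = ∑ k, y k := by
    rw [hB]; exact Finset.sum_image (fun a _ b _ h => hyinj h)
  have hdecomp : ∀ S T : Finset ℚ, ∑ a ∈ S, a = ∑ a ∈ S \ T, a + ∑ a ∈ S ∩ T, a := by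
    intro S T
    rw [← Finset.sum_sdiff (Finset.inter_subset_left : S ∩ T ⊆ S),
      Finset.sdiff_inter_self_left]
  have hsumP : 0 < ∑ m ∈ P, x m := by
    have h1 := hdecomp A B
    have h2 := hdecomp B A
    have h3 : ∑ a ∈ A \ B, a = ∑ m ∈ P, x m := by
      rw [hAB]; exact Finset.sum_image (fun a _ b _ h => hxinj h)
    have h4 : ∑ a ∈ B \ A, a = ∑ m ∈ P, -x m := by
      rw [hBA]; exact Finset.sum_image (fun a _ b _ h => hnegxinj h)
    have h5 : A ∩ B = B ∩ A := Finset.inter_comm A B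
    rw [h5] at h1
    have h6 : ∑ m ∈ P, -x m = -∑ m ∈ P, x m := Finset.sum_neg_distrib x
    have h7 : ∑ b ∈ B, b < ∑ a ∈ A, a := by rw [hsumA, hsumB]; exact hsum
    linarith
  have hPne : P.Nonempty := by
    by_contra h
    rw [Finset.not_nonempty_iff_eq_empty] at h
    rw [h, Finset.sum_empty] at hsumP
    exact lt_irrefl 0 hsumP
  set i := P.min' hPne with hidef
  have hiP : i ∈ P := P.min'_mem hPne
  by_cases hcase : (P.erase i).Nonempty
  · -- at least two elements in P
    set j := (P.erase i).min' hcase with hjdef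
    have hjP' : j ∈ P.erase i := Finset.min'_mem _ _
    have hjP : j ∈ P := Finset.mem_of_mem_erase hjP'
    have hji : j ≠ i := Finset.ne_of_mem_erase hjP'
    have hij : i < j := lt_of_le_of_ne (P.min'_le j hjP) (Ne.symm hji)
    have hpos : 0 < x i + x j := by
      by_contra hc
      push_neg at hc
      have hxij : x j < x i := hxsa hij
      have hxj_neg : x j < 0 := by
        rcases lt_or_ge (x j) 0 with h | h
        · exact h
        · linarith
      have hrest : ∑ m ∈ (P.erase i).erase j, x m ≤ 0 := by
        apply Finset.sum_nonpos
        intro m hm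
        have hmj : m ≠ j := Finset.ne_of_mem_erase hm
        have hm' : m ∈ P.erase i := Finset.mem_of_mem_erase hm
        have hjm : j < m := lt_of_le_of_ne (Finset.min'_le _ m hm') (Ne.symm hmj)
        have := hxsa hjm
        linarith
      have e1 : x i + ∑ m ∈ P.erase i, x m = ∑ m ∈ P, x m :=
        Finset.add_sum_erase P x hiP
      have e2 : x j + ∑ m ∈ (P.erase i).erase j, x m = ∑ m ∈ P.erase i, x m :=
        Finset.add_sum_erase _ x hjP'
      linarith
    refine ⟨i, j, hij, hpos, ?_, ?_, hbound i hiP, hbound j hjP⟩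
    · intro k _ _ hk
      exact hnotA i hiP (hk ▸ Finset.mem_image_of_mem x (Finset.mem_univ k))
    · intro k _ _ hk
      exact hnotA j hjP (hk ▸ Finset.mem_image_of_mem x (Finset.mem_univ k))
  · -- P is a singleton {i}; use the product identity to find a zero entry
    have hPsing : P = {i} := by
      rw [Finset.not_nonempty_iff_eq_empty] at hcase
      refine Finset.eq_singleton_iff_unique_mem.mpr ⟨hiP, ?_⟩
      intro m hm
      by_contra hmi
      have : m ∈ P.erase i := Finset.mem_erase.mpr ⟨hmi, hm⟩
      rw [hcase] at this
      exact absurd this (Finset.notMem_empty m)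
    have hxi_pos : 0 < x i := by
      rw [hPsing, Finset.sum_singleton] at hsumP
      exact hsumP
    have hprodxy : ∏ k, y k = ∏ k, x k := by
      calc ∏ k, y k = ∏ k, (ε k * x (σ k)) := Finset.prod_congr rfl (fun k _ => hyx k)
        _ = (∏ k, ε k) * ∏ k, x (σ k) := Finset.prod_mul_distrib
        _ = ∏ k, x k := by rw [hprod, one_mul, Equiv.prod_comp]
    have hprodA : ∏ a ∈ A, a = ∏ k, x k := by
      rw [hA]; exact Finset.prod_image (fun a _ b _ h => hxinj h)
    have hprodB : ∏ b ∈ B, b = ∏ k, y k := by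
      rw [hB]; exact Finset.prod_image (fun a _ b _ h => hyinj h)
    have hxiA : x i ∈ A := Finset.mem_image_of_mem x (Finset.mem_univ i)
    have hnegxiA : -x i ∉ A := hnotA i hiP
    have hBAsing : B \ A = {-x i} := by
      rw [hBA, hPsing, Finset.image_singleton]
    have hBinter : B ∩ A = A.erase (x i) := by
      ext a
      constructor
      · intro ha
        obtain ⟨haB, haA⟩ := Finset.mem_inter.mp ha
        refine Finset.mem_erase.mpr ⟨?_, haA⟩
        intro h
        subst h
        exact (hPmem i).mp hiP haB
      · intro ha
        obtain ⟨hane, haA⟩ := Finset.mem_erase.mp ha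
        refine Finset.mem_inter.mpr ⟨?_, haA⟩
        by_contra haB
        have : a ∈ A \ B := Finset.mem_sdiff.mpr ⟨haA, haB⟩
        rw [hAB, hPsing, Finset.image_singleton, Finset.mem_singleton] at this
        exact hane this
    have hBeq : B = insert (-x i) (A.erase (x i)) := by
      have h := (Finset.sdiff_union_inter B A).symm
      rw [hBAsing, hBinter] at h
      rw [h, Finset.insert_eq]
    have hprodBeq : ∏ b ∈ B, b = -x i * ∏ a ∈ A.erase (x i), a := by
      rw [hBeq, Finset.prod_insert (fun h => hnegxiA (Finset.mem_of_mem_erase h))]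
    have hprodAeq : x i * ∏ a ∈ A.erase (x i), a = ∏ a ∈ A, a :=
      Finset.mul_prod_erase A id hxiA
    have hPA0 : ∏ a ∈ A, a = 0 := by
      have h1 : ∏ b ∈ B, b = ∏ a ∈ A, a := by rw [hprodB, hprodxy, ← hprodA]
      have h2 : x i * (∏ a ∈ A, a) = -(x i * ∏ a ∈ A, a) := by
        calc x i * ∏ a ∈ A, a = x i * ∏ b ∈ B, b := by rw [h1]
          _ = x i * (-x i * ∏ a ∈ A.erase (x i), a) := by rw [hprodBeq]
          _ = -x i * (x i * ∏ a ∈ A.erase (x i), a) := by ring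
          _ = -x i * ∏ a ∈ A, a := by rw [hprodAeq]
          _ = -(x i * ∏ a ∈ A, a) := by ring
      have h3 : x i * ∏ a ∈ A, a = 0 := by linarith
      exact (mul_eq_zero.mp h3).resolve_left (ne_of_gt hxi_pos)
    obtain ⟨a, haA, ha0⟩ := Finset.prod_eq_zero_iff.mp hPA0
    rw [hA] at haA
    obtain ⟨n, -, hn⟩ := Finset.mem_image.mp haA
    have hxn0 : x n = 0 := by rw [hn, ha0]
    have hni : n ≠ i := by
      intro h
      rw [h] at hxn0
      linarith
    have hLneg : 0 < -L := hzero n hxn0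
    have hxn_lt : x n < -L := by rw [hxn0]; linarith
    have hcond_n : ∀ k, k ≠ n → x k ≠ -x n := by
      intro k hk h
      rw [hxn0, neg_zero, ← hxn0] at h
      exact hk (hxinj h)
    have hcond_i : ∀ k, x k ≠ -x i := by
      intro k h
      exact hnegxiA (h ▸ Finset.mem_image_of_mem x (Finset.mem_univ k))
    rcases lt_or_gt_of_ne hni with h | h
    · refine ⟨n, i, h, by rw [hxn0]; linarith, ?_, ?_, hxn_lt, hbound i hiP⟩
      · intro k hk _; exact hcond_n k hk
      · intro k _ _; exact hcond_i k
    · refine ⟨i, n, h, by rw [hxn0]; linarith, ?_, ?_, hbound i hiP, hxn_lt⟩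
      · intro k _ _; exact hcond_i k
      · intro k _ hk; exact hcond_n k hk

/-- Let `δ ∈ ℤ`, `ρ̂ = (−δ/2, −δ/2−1, …, −δ/2−(r−1)) ∈ ℚ^r`, and
let `λ, μ` be partitions with at most `r` parts such that `μ ⊊ λ` and `λ, μ`
are conjugate under the star action of `W(D_r)` (`μ + ρ̂ = w(λ + ρ̂)` for an
even signed permutation `w`).  Then there are `i < j` such that
`(λ+ρ̂)_i + (λ+ρ̂)_j > 0` and `ν = s_{ε_i+ε_j}(λ+ρ̂)` has pairwise distinct
entries, all `> −δ/2 − r`. -/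
theorem stmt13 (r : ℕ) (hr : 1 ≤ r) (δ : ℤ)
    (rhohat : Fin r → ℚ) (hrho : rhohat = fun k : Fin r => -(δ : ℚ)/2 - ((k : ℕ) : ℚ))
    (lam mu : Fin r → ℤ)
    (hlanti : Antitone lam) (hlnonneg : ∀ k, 0 ≤ lam k)
    (hmanti : Antitone mu) (hmnonneg : ∀ k, 0 ≤ mu k)
    (hsub : ∀ k, mu k ≤ lam k) (hne : mu ≠ lam)
    (hconj : IsEvenSignedPermOfQ (fun k => (lam k : ℚ) + rhohat k)
              (fun k => (mu k : ℚ) + rhohat k)) :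
    ∃ i j : Fin r, i < j ∧
      0 < ((lam i : ℚ) + rhohat i) + ((lam j : ℚ) + rhohat j) ∧
      Function.Injective (fun k : Fin r =>
        if k = i then -((lam j : ℚ) + rhohat j)
        else if k = j then -((lam i : ℚ) + rhohat i)
        else (lam k : ℚ) + rhohat k) ∧
      ∀ k : Fin r, -(δ : ℚ)/2 - r <
        (if k = i then -((lam j : ℚ) + rhohat j)
        else if k = j then -((lam i : ℚ) + rhohat i)
        else (lam k : ℚ) + rhohat k) := by
  obtain ⟨σ, ε, hε, hprod, hyx⟩ := hconj
  have hrho' : ∀ k : Fin r, rhohat k = -(δ : ℚ)/2 - ((k : ℕ) : ℚ) := fun k => by rw [hrho]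
  have hxsa : StrictAnti (fun k : Fin r => (lam k : ℚ) + rhohat k) := by
    intro a b hab
    simp only
    rw [hrho' a, hrho' b]
    have h1 : lam b ≤ lam a := hlanti hab.le
    have h1' : (lam b : ℚ) ≤ (lam a : ℚ) := by exact_mod_cast h1
    have h2 : (a : ℕ) < (b : ℕ) := hab
    have h2' : ((a : ℕ) : ℚ) < ((b : ℕ) : ℚ) := by exact_mod_cast h2
    linarith
  have hysa : StrictAnti (fun k : Fin r => (mu k : ℚ) + rhohat k) := by
    intro a b hab
    simp only
    rw [hrho' a, hrho' b]
    have h1 : mu b ≤ mu a := hmanti hab.le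
    have h1' : (mu b : ℚ) ≤ (mu a : ℚ) := by exact_mod_cast h1
    have h2 : (a : ℕ) < (b : ℕ) := hab
    have h2' : ((a : ℕ) : ℚ) < ((b : ℕ) : ℚ) := by exact_mod_cast h2
    linarith
  have hylb : ∀ k : Fin r, -(δ : ℚ)/2 - (r : ℚ) < (mu k : ℚ) + rhohat k := by
    intro k
    rw [hrho' k]
    have h1 : (0 : ℚ) ≤ (mu k : ℚ) := by exact_mod_cast hmnonneg k
    have h2 : ((k : ℕ) : ℚ) < (r : ℚ) := by exact_mod_cast k.isLt
    linarith
  have hxlb : ∀ k : Fin r, -(δ : ℚ)/2 - (r : ℚ) < (lam k : ℚ) + rhohat k := by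
    intro k
    rw [hrho' k]
    have h1 : (0 : ℚ) ≤ (lam k : ℚ) := by exact_mod_cast hlnonneg k
    have h2 : ((k : ℕ) : ℚ) < (r : ℚ) := by exact_mod_cast k.isLt
    linarith
  have hzero : ∀ k : Fin r, (lam k : ℚ) + rhohat k = 0 → 0 < -(-(δ : ℚ)/2 - (r : ℚ)) := by
    intro k hk
    rw [hrho' k] at hk
    have h1 : (0 : ℚ) ≤ (lam k : ℚ) := by exact_mod_cast hlnonneg k
    have h2 : ((k : ℕ) : ℚ) < (r : ℚ) := by exact_mod_cast k.isLt
    linarith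
  have hsum : ∑ k, ((mu k : ℚ) + rhohat k) < ∑ k, ((lam k : ℚ) + rhohat k) := by
    apply Finset.sum_lt_sum
    · intro k _
      have h : (mu k : ℚ) ≤ (lam k : ℚ) := by exact_mod_cast hsub k
      linarith
    · obtain ⟨k, hk⟩ := Function.ne_iff.mp hne
      refine ⟨k, Finset.mem_univ k, ?_⟩
      have h : (mu k : ℚ) < (lam k : ℚ) := by
        exact_mod_cast lt_of_le_of_ne (hsub k) hk
      linarith
  obtain ⟨i, j, hij, hpos, h2, h3, hbi, hbj⟩ :=
    main_lemma (fun k : Fin r => (lam k : ℚ) + rhohat k)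
      (fun k : Fin r => (mu k : ℚ) + rhohat k)
      (-(δ : ℚ)/2 - (r : ℚ)) hxsa hysa.injective hylb hzero hsum σ ε hε hprod hyx
  obtain ⟨hinj, hlbv⟩ :=
    nu_props (fun k : Fin r => (lam k : ℚ) + rhohat k) (-(δ : ℚ)/2 - (r : ℚ))
      hxsa.injective i j (ne_of_lt hij) h2 h3 hxlb hbi hbj
  exact ⟨i, j, hij, hpos, hinj, hlbv⟩
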